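/- Let (𝒵,𝒯) be a measurable space and let {P_ω : ω ∈ Ω} be a family of probability measures indexed by the cube Ω = {0,1}^m. Let θ ≥ 1 and 0 ≤ α < 2, and assume that H²(P_ω, P_{ω′}) ≤ α whenever ω, ω′ ∈ Ω differ in exactly one coordinate. Then inf_{ŵ} max_{ω∈Ω} E_ω[Σ_{j=1}^m |ŵ_j − ω_j|^θ] ≥ m·2^{−3−θ}·(2−α)², where the infimum is taken over all estimators ŵ with values in [0,1]^m based on one observation from the statistical experiment {P_ω : ω ∈ Ω}, and E_ω denotes expectation under P_ω. -/

import Mathlib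

open MeasureTheory
open scoped ENNReal NNReal

/-- The squared Hellinger distance
`H²(P,Q) = ∫ (√(dP/dμ) − √(dQ/dμ))² dμ`, computed with the dominating measure `μ = P + Q`. -/
noncomputable def hellingerSq {Z : Type*} [MeasurableSpace Z] (P Q : Measure Z) : ℝ :=
  ∫ z, (Real.sqrt ((P.rnDeriv (P + Q)) z).toReal -
        Real.sqrt ((Q.rnDeriv (P + Q)) z).toReal) ^ 2 ∂(P + Q)

lemma assouad_pair_bound {Z : Type*} [MeasurableSpace Z] (P Q : Measure Z)
    [IsProbabilityMeasure P] [IsProbabilityMeasure Q]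
    (α : ℝ) (hα2 : α ≤ 2) (hH : hellingerSq P Q ≤ α)
    (c : ℝ) (hc : 0 ≤ c) (f g : Z → ℝ)
    (hf : Measurable f) (hg : Measurable g)
    (hf0 : ∀ z, 0 ≤ f z) (hf1 : ∀ z, f z ≤ 1)
    (hg0 : ∀ z, 0 ≤ g z) (hg1 : ∀ z, g z ≤ 1)
    (hfg : ∀ z, c ≤ f z + g z) :
    c * (2 - α) ^ 2 / 8 ≤ ∫ z, f z ∂P + ∫ z, g z ∂Q := by
  set μ : Measure Z := P + Q with hμ
  have hPμ : P ≪ μ := Measure.absolutelyContinuous_of_le (Measure.le_add_right le_rfl)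
  have hQμ : Q ≪ μ := Measure.absolutelyContinuous_of_le (Measure.le_add_left le_rfl)
  set p : Z → ℝ := fun z => (P.rnDeriv μ z).toReal with hp_def
  set q : Z → ℝ := fun z => (Q.rnDeriv μ z).toReal with hq_def
  have hpm : Measurable p := (Measure.measurable_rnDeriv P μ).ennreal_toReal
  have hqm : Measurable q := (Measure.measurable_rnDeriv Q μ).ennreal_toReal
  have hp0 : ∀ z, 0 ≤ p z := fun z => ENNReal.toReal_nonneg
  have hq0 : ∀ z, 0 ≤ q z := fun z => ENNReal.toReal_nonneg
  -- a.e. p + q = 1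
  have hsum : ∀ᵐ z ∂μ, p z + q z = 1 := by
    filter_upwards [Measure.rnDeriv_add P Q μ, Measure.rnDeriv_self μ,
      Measure.rnDeriv_lt_top P μ, Measure.rnDeriv_lt_top Q μ] with z h1 h2 hpt hqt
    have : P.rnDeriv μ z + Q.rnDeriv μ z = 1 := by
      rw [← Pi.add_apply, ← h1]; exact h2
    have := congrArg ENNReal.toReal this
    rwa [ENNReal.toReal_add hpt.ne hqt.ne, ENNReal.toReal_one] at this
  have hμuniv : (μ Set.univ).toReal = 2 := by
    simp [hμ, Measure.add_apply, measure_univ]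
    norm_num
  -- s = sqrt (p q)
  set s : Z → ℝ := fun z => Real.sqrt (p z * q z) with hs_def
  have hsm : Measurable s := (hpm.mul hqm).sqrt
  have hs0 : ∀ z, 0 ≤ s z := fun z => Real.sqrt_nonneg _
  have hs1 : ∀ᵐ z ∂μ, s z ≤ 1 := by
    filter_upwards [hsum] with z hz
    have : p z * q z ≤ 1 := by nlinarith [hp0 z, hq0 z]
    calc s z ≤ Real.sqrt 1 := Real.sqrt_le_sqrt this
    _ = 1 := Real.sqrt_one
  have hs_int : Integrable s μ := by
    refine Integrable.mono' (integrable_const 1) hsm.aestronglyMeasurable ?_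
    filter_upwards [hs1] with z hz
    rw [Real.norm_of_nonneg (hs0 z)]; exact hz
  -- Hellinger identity
  have hHid : hellingerSq P Q = 2 - 2 * ∫ z, s z ∂μ := by
    have h1 : hellingerSq P Q = ∫ z, (1 - 2 * s z) ∂μ := by
      refine integral_congr_ae ?_
      filter_upwards [hsum] with z hz
      have hps : Real.sqrt (p z) ^ 2 = p z := Real.sq_sqrt (hp0 z)
      have hqs : Real.sqrt (q z) ^ 2 = q z := Real.sq_sqrt (hq0 z)
      have hmul : Real.sqrt (p z) * Real.sqrt (q z) = s z :=
        (Real.sqrt_mul (hp0 z) (q z)).symm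
      show (Real.sqrt (p z) - Real.sqrt (q z)) ^ 2 = 1 - 2 * s z
      nlinarith [hps, hqs, hmul, hz]
    rw [h1, integral_sub (integrable_const 1) (hs_int.const_mul 2), integral_const,
      integral_const_mul]
    rw [smul_eq_mul, mul_one, Measure.real_def, hμuniv]
  have hs_lb : (2 - α) / 2 ≤ ∫ z, s z ∂μ := by
    rw [hHid] at hH; linarith
  have hs_int_nonneg : 0 ≤ ∫ z, s z ∂μ := integral_nonneg hs0
  -- t = p q
  set t : Z → ℝ := fun z => p z * q z with ht_def
  have htm : Measurable t := hpm.mul hqm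
  have ht0 : ∀ z, 0 ≤ t z := fun z => mul_nonneg (hp0 z) (hq0 z)
  have ht1 : ∀ᵐ z ∂μ, t z ≤ 1 := by
    filter_upwards [hsum] with z hz
    show p z * q z ≤ 1
    nlinarith [hp0 z, hq0 z]
  have ht_int : Integrable t μ := by
    refine Integrable.mono' (integrable_const 1) htm.aestronglyMeasurable ?_
    filter_upwards [ht1] with z hz
    rw [Real.norm_of_nonneg (ht0 z)]; exact hz
  have htA : 0 ≤ ∫ z, t z ∂μ := integral_nonneg ht0
  -- Cauchy-Schwarz: (∫ s)^2 ≤ 2 ∫ t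
  have hCS : (∫ z, s z ∂μ) ^ 2 ≤ 2 * ∫ z, t z ∂μ := by
    have hpq : (2:ℝ).HolderConjugate 2 := Real.holderConjugate_iff.mpr ⟨by norm_num, by norm_num⟩
    have hsmem : MemLp s (ENNReal.ofReal 2) μ := by
      refine MemLp.of_bound hsm.aestronglyMeasurable 1 ?_
      filter_upwards [hs1] with z hz
      rw [Real.norm_of_nonneg (hs0 z)]; exact hz
    have h1mem : MemLp (fun _ : Z => (1:ℝ)) (ENNReal.ofReal 2) μ := memLp_const 1
    have := MeasureTheory.integral_mul_le_Lp_mul_Lq_of_nonneg hpq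
      (Filter.Eventually.of_forall hs0) (Filter.Eventually.of_forall fun _ => zero_le_one)
      hsmem h1mem
    simp only [mul_one] at this
    have hsq : ∀ z, s z ^ (2:ℝ) = t z := by
      intro z
      rw [show (2:ℝ) = ((2:ℕ):ℝ) by norm_num, Real.rpow_natCast]
      exact Real.sq_sqrt (ht0 z)
    have hone : ∫ z, (1:ℝ) ^ (2:ℝ) ∂μ = 2 := by
      simp [Real.one_rpow, hμuniv]
      rw [Measure.real_def, hμuniv]
    rw [hone] at this
    have heq : ∫ z, s z ^ (2:ℝ) ∂μ = ∫ z, t z ∂μ := by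
      exact integral_congr_ae (Filter.Eventually.of_forall hsq)
    rw [heq] at this
    -- this : ∫ s ≤ (∫ t) ^ (1/2) * 2 ^ (1/2)
    have h2 : ((∫ z, t z ∂μ) ^ ((1:ℝ)/2)) = Real.sqrt (∫ z, t z ∂μ) :=
      (Real.sqrt_eq_rpow _).symm
    have h3 : ((2:ℝ) ^ ((1:ℝ)/2)) = Real.sqrt 2 := (Real.sqrt_eq_rpow _).symm
    rw [h2, h3] at this
    nlinarith [Real.sq_sqrt htA, Real.sq_sqrt (show (0:ℝ) ≤ 2 by norm_num),
      Real.sqrt_nonneg (∫ z, t z ∂μ), Real.sqrt_nonneg (2:ℝ), hs_int_nonneg]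
  -- integral change of measure
  have hf_int : Integrable f P := by
    refine Integrable.mono' (integrable_const 1) hf.aestronglyMeasurable ?_
    exact Filter.Eventually.of_forall fun z => by
      rw [Real.norm_of_nonneg (hf0 z)]; exact hf1 z
  have hg_int : Integrable g Q := by
    refine Integrable.mono' (integrable_const 1) hg.aestronglyMeasurable ?_
    exact Filter.Eventually.of_forall fun z => by
      rw [Real.norm_of_nonneg (hg0 z)]; exact hg1 z
  have hfP : ∫ z, f z ∂P = ∫ z, p z * f z ∂μ := by
    rw [← integral_rnDeriv_smul hPμ (f := f)]
    simp [smul_eq_mul]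
    rfl
  have hgQ : ∫ z, g z ∂Q = ∫ z, q z * g z ∂μ := by
    rw [← integral_rnDeriv_smul hQμ (f := g)]
    simp [smul_eq_mul]
    rfl
  have hfp_int : Integrable (fun z => p z * f z) μ := by
    have := (integrable_rnDeriv_smul_iff hPμ (f := f)).2 hf_int
    simpa [smul_eq_mul] using this
  have hgq_int : Integrable (fun z => q z * g z) μ := by
    have := (integrable_rnDeriv_smul_iff hQμ (f := g)).2 hg_int
    simpa [smul_eq_mul] using this
  have hlow : c * ∫ z, t z ∂μ ≤ ∫ z, f z ∂P + ∫ z, g z ∂Q := by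
    rw [hfP, hgQ, ← integral_add hfp_int hgq_int, ← integral_const_mul]
    refine integral_mono_ae ((ht_int.const_mul c)) (hfp_int.add hgq_int) ?_
    filter_upwards [hsum] with z hz
    have hp1 : p z ≤ 1 := by linarith [hq0 z]
    have hq1 : q z ≤ 1 := by linarith [hp0 z]
    have h1 : c * t z ≤ (f z + g z) * t z :=
      mul_le_mul_of_nonneg_right (hfg z) (ht0 z)
    have h2 : f z * (p z * q z) ≤ f z * p z := by
      have : p z * q z ≤ p z := by nlinarith [hp0 z]
      exact mul_le_mul_of_nonneg_left this (hf0 z)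
    have h3 : g z * (p z * q z) ≤ g z * q z := by
      have : p z * q z ≤ q z := by nlinarith [hq0 z]
      exact mul_le_mul_of_nonneg_left this (hg0 z)
    show c * t z ≤ p z * f z + q z * g z
    simp only [ht_def] at h1 ⊢
    nlinarith [h1, h2, h3]
  -- combine
  have : c * ((2 - α)/2) ^ 2 / 2 ≤ c * ∫ z, t z ∂μ := by
    have h1 : ((2 - α)/2) ^ 2 ≤ (∫ z, s z ∂μ) ^ 2 := by
      have h2α : 0 ≤ (2 - α)/2 := by linarith
      exact pow_le_pow_left₀ h2α hs_lb 2
    nlinarith [hCS, hc]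
  calc c * (2 - α) ^ 2 / 8 = c * ((2 - α)/2) ^ 2 / 2 := by ring
  _ ≤ c * ∫ z, t z ∂μ := this
  _ ≤ ∫ z, f z ∂P + ∫ z, g z ∂Q := hlow

/-- Assouad's lemma, Lemma 1: if `{P_ω : ω ∈ {0,1}^m}` are probability
measures with `H²(P_ω, P_{ω'}) ≤ α < 2` whenever `ω` and `ω'` differ in exactly one coordinate,
then every estimator `ŵ : 𝒵 → [0,1]^m` based on one observation satisfies
`max_{ω} E_ω[Σ_j |ŵ_j − ω_j|^θ] ≥ m 2^{−3−θ} (2−α)²` for every `θ ≥ 1`. -/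
theorem assouad_lemma {Z : Type*} [MeasurableSpace Z] (m : ℕ)
    (P : (Fin m → Bool) → Measure Z) (hP : ∀ ω, IsProbabilityMeasure (P ω))
    (θ : ℝ) (hθ : 1 ≤ θ) (α : ℝ) (hα0 : 0 ≤ α) (hα2 : α < 2)
    (hH : ∀ ω ω' : Fin m → Bool,
      (Finset.univ.filter fun j => ω j ≠ ω' j).card = 1 → hellingerSq (P ω) (P ω') ≤ α)
    (what : Z → Fin m → ℝ) (hwhat : Measurable what)
    (hwhat01 : ∀ z j, what z j ∈ Set.Icc (0 : ℝ) 1) :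
    ∃ ω : Fin m → Bool,
      ∫ z, (∑ j, |what z j - (if ω j then 1 else 0)| ^ θ) ∂(P ω)
        ≥ (m : ℝ) * 2 ^ (-3 - θ) * (2 - α) ^ 2 := by
  have hθ0 : (0:ℝ) ≤ θ := le_trans zero_le_one hθ
  haveI := hP
  -- coordinate loss functions
  set r : Fin m → Bool → Z → ℝ :=
    fun j b z => |what z j - (if b then 1 else 0)| ^ θ with hr_def
  have hr_meas : ∀ j b, Measurable (r j b) := by
    intro j b
    exact (Real.continuous_rpow_const hθ0).measurable.comp
      ((((measurable_pi_apply j).comp hwhat).sub measurable_const).abs)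
  have habs01 : ∀ (j : Fin m) (b : Bool) (z : Z), |what z j - (if b then 1 else 0)| ≤ 1 := by
    intro j b z
    obtain ⟨h0, h1⟩ := hwhat01 z j
    cases b <;> simp <;> rw [abs_le] <;> constructor <;> linarith
  have hr0 : ∀ j b z, 0 ≤ r j b z := fun j b z => Real.rpow_nonneg (abs_nonneg _) θ
  have hr1 : ∀ j b z, r j b z ≤ 1 := fun j b z =>
    Real.rpow_le_one (abs_nonneg _) (habs01 j b z) hθ0
  -- pointwise lower bound for a pair
  have hkey : ∀ j z (b : Bool), (2:ℝ) ^ (1 - θ) ≤ r j b z + r j (!b) z := by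
    intro j z b
    obtain ⟨h0, h1⟩ := hwhat01 z j
    set a := what z j
    have hcvx := convexOn_rpow hθ
    have hmem := hcvx.2 (Set.mem_Ici.2 h0) (Set.mem_Ici.2 (by linarith : (0:ℝ) ≤ 1 - a))
      (by norm_num : (0:ℝ) ≤ (1:ℝ)/2) (by norm_num : (0:ℝ) ≤ (1:ℝ)/2) (by norm_num)
    simp only [smul_eq_mul] at hmem
    have harg : (1:ℝ)/2 * a + 1/2 * (1 - a) = 1/2 := by ring
    rw [harg] at hmem
    have hhalf : ((1:ℝ)/2) ^ θ = 2 ^ (-θ) := by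
      rw [show ((1:ℝ)/2) = (2:ℝ)⁻¹ by norm_num, Real.inv_rpow (by norm_num),
        ← Real.rpow_neg (by norm_num)]
    have h2 : (2:ℝ) ^ (1 - θ) = 2 * 2 ^ (-θ) := by
      rw [show (1:ℝ) - θ = 1 + (-θ) by ring, Real.rpow_add (by norm_num), Real.rpow_one]
    have hr_eval : r j b z + r j (!b) z = a ^ θ + (1 - a) ^ θ := by
      cases b <;> simp only [hr_def, Bool.not_false, Bool.not_true, if_true, if_false,
        Bool.false_eq_true] <;>
        rw [sub_zero, abs_of_nonneg h0, abs_of_nonpos (by linarith), neg_sub] <;> ring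
    rw [hr_eval, h2, ← hhalf]
    linarith [hmem]
  -- integrability of coordinate losses
  have hr_int : ∀ (ω : Fin m → Bool) (j : Fin m) (b : Bool), Integrable (r j b) (P ω) := by
    intro ω j b
    refine Integrable.mono' (integrable_const 1) (hr_meas j b).aestronglyMeasurable ?_
    exact Filter.Eventually.of_forall fun z => by
      rw [Real.norm_of_nonneg (hr0 j b z)]; exact hr1 j b z
  set c : ℝ := (2:ℝ) ^ (1 - θ) with hc_def
  have hc0 : 0 ≤ c := Real.rpow_nonneg (by norm_num) _
  set F : (Fin m → Bool) → ℝ := fun ω => ∫ z, ∑ j, r j (ω j) z ∂(P ω) with hF_def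
  -- flip involution
  have hflip_inv : ∀ j : Fin m, Function.Involutive
      (fun ω : Fin m → Bool => Function.update ω j (!ω j)) := by
    intro j ω
    funext i
    by_cases h : i = j
    · subst h; simp
    · simp [Function.update_of_ne h]
  -- pair bound
  have hpair : ∀ (j : Fin m) (ω : Fin m → Bool),
      c * (2 - α) ^ 2 / 8 ≤ (∫ z, r j (ω j) z ∂(P ω))
        + ∫ z, r j ((Function.update ω j (!ω j)) j) z ∂(P (Function.update ω j (!ω j))) := by
    intro j ω
    set ω' := Function.update ω j (!ω j) with hω'
    have hcard : (Finset.univ.filter fun i => ω i ≠ ω' i).card = 1 := by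
      have : (Finset.univ.filter fun i => ω i ≠ ω' i) = {j} := by
        ext i
        simp only [Finset.mem_filter, Finset.mem_univ, true_and, Finset.mem_singleton, hω']
        by_cases h : i = j
        · subst h; simp
        · simp [Function.update_of_ne h, h]
      rw [this, Finset.card_singleton]
    have hupd : ω' j = !ω j := Function.update_self j (!ω j) ω
    rw [hupd]
    exact assouad_pair_bound (P ω) (P ω') α hα2.le (hH ω ω' hcard) c hc0
      (r j (ω j)) (r j (!ω j)) (hr_meas _ _) (hr_meas _ _)
      (hr0 _ _) (hr1 _ _) (hr0 _ _) (hr1 _ _) (fun z => hkey j z (ω j))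
  -- sum over ω for fixed j
  have hsumj : ∀ j : Fin m,
      (2:ℝ)^m * (c * (2-α)^2/16) ≤ ∑ ω : Fin m → Bool, ∫ z, r j (ω j) z ∂(P ω) := by
    intro j
    have hbij : ∑ ω : Fin m → Bool,
        (∫ z, r j ((Function.update ω j (!ω j)) j) z ∂(P (Function.update ω j (!ω j))))
        = ∑ ω : Fin m → Bool, ∫ z, r j (ω j) z ∂(P ω) := by
      exact Fintype.sum_equiv ((hflip_inv j).toPerm _) _ _ (fun ω => rfl)
    have h1 : (2:ℝ)^m * (c * (2-α)^2/8)
        ≤ 2 * ∑ ω : Fin m → Bool, ∫ z, r j (ω j) z ∂(P ω) := by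
      calc (2:ℝ)^m * (c * (2-α)^2/8)
          = ∑ _ω : Fin m → Bool, c * (2-α)^2/8 := by
            rw [Finset.sum_const, Finset.card_univ]
            simp [Fintype.card_fun, nsmul_eq_mul, mul_comm]
        _ ≤ ∑ ω : Fin m → Bool, ((∫ z, r j (ω j) z ∂(P ω))
              + ∫ z, r j ((Function.update ω j (!ω j)) j) z ∂(P (Function.update ω j (!ω j)))) :=
            Finset.sum_le_sum fun ω _ => hpair j ω
        _ = 2 * ∑ ω : Fin m → Bool, ∫ z, r j (ω j) z ∂(P ω) := by
            rw [Finset.sum_add_distrib, hbij]; ring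
    linarith
  -- total sum
  have hFsum : ∀ ω, F ω = ∑ j, ∫ z, r j (ω j) z ∂(P ω) := fun ω =>
    integral_finset_sum _ (fun j _ => hr_int ω j (ω j))
  have htotal : (2:ℝ)^m * ((m:ℝ) * (c * (2-α)^2/16)) ≤ ∑ ω : Fin m → Bool, F ω := by
    calc (2:ℝ)^m * ((m:ℝ) * (c * (2-α)^2/16))
        = ∑ _j : Fin m, (2:ℝ)^m * (c * (2-α)^2/16) := by
          rw [Finset.sum_const, Finset.card_univ, Fintype.card_fin, nsmul_eq_mul]; ring
      _ ≤ ∑ j : Fin m, ∑ ω : Fin m → Bool, ∫ z, r j (ω j) z ∂(P ω) :=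
          Finset.sum_le_sum fun j _ => hsumj j
      _ = ∑ ω : Fin m → Bool, ∑ j : Fin m, ∫ z, r j (ω j) z ∂(P ω) := Finset.sum_comm
      _ = ∑ ω : Fin m → Bool, F ω := by
          exact Finset.sum_congr rfl fun ω _ => (hFsum ω).symm
  -- relate c to 2^(-3-θ)
  have hc16 : c = 16 * (2:ℝ) ^ (-3 - θ) := by
    rw [hc_def, show (1:ℝ) - θ = 4 + (-3 - θ) by ring, Real.rpow_add (by norm_num)]
    have h4 : (2:ℝ) ^ (4:ℝ) = 16 := by
      rw [show (4:ℝ) = ((4:ℕ):ℝ) by norm_num, Real.rpow_natCast]; norm_num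
    rw [h4]
  set K : ℝ := (m:ℝ) * 2 ^ (-3 - θ) * (2 - α) ^ 2 with hK_def
  have hKle : ∑ _ω : Fin m → Bool, K ≤ ∑ ω : Fin m → Bool, F ω := by
    refine le_trans ?_ htotal
    rw [Finset.sum_const, Finset.card_univ, nsmul_eq_mul]
    simp only [Fintype.card_fun, Fintype.card_fin, Fintype.card_bool]
    rw [hK_def, hc16]
    push_cast
    ring_nf
    exact le_of_eq (by ring)
  obtain ⟨ω, -, hω⟩ := Finset.exists_le_of_sum_le Finset.univ_nonempty hKle
  exact ⟨ω, hω⟩
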